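/- arXiv:1611.06628 — 2 statements merged into one kernel-verified Lean document; each statement's English description precedes it below -/
import Mathlib

section
/- The discriminant of the polynomial f₁(x) = x^12 - 4x^11 - 4x^10 + 16x^9 + 24x^8 - 30x^7 - 78x^6 - 18x^5 + 72x^4 + 86x^3 + 52x^2 + 16x + 2 equals -2^14 · 3^30 · 11^9. -/
open Polynomial Finset

noncomputable def PR (p q : Polynomial ℂ) : ℂ := (p.roots.map (fun z => q.eval z)).prod

lemma PR_congr (p q₁ q₂ k : Polynomial ℂ) (h : q₁ = k * p + q₂) : PR p q₁ = PR p q₂ := by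
  unfold PR
  congr 1
  refine Multiset.map_congr rfl fun z hz => ?_
  have hz' : p.eval z = 0 := isRoot_of_mem_roots hz
  simp [h, hz']

lemma card_roots_eq (p : Polynomial ℂ) : p.roots.card = p.natDegree :=
  splits_iff_card_roots.mp (IsAlgClosed.splits p)

lemma PR_C (p : Polynomial ℂ) (c : ℂ) : PR p (C c) = c ^ p.natDegree := by
  simp [PR, Multiset.map_const', Multiset.prod_replicate, card_roots_eq]

lemma PR_C_mul (p q : Polynomial ℂ) (c : ℂ) : PR p (C c * q) = c ^ p.natDegree * PR p q := by
  simp [PR, Multiset.prod_map_mul, Multiset.map_const', Multiset.prod_replicate, card_roots_eq]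

lemma PR_swap (p q : Polynomial ℂ) (hp : p ≠ 0) :
    PR p q = (-1) ^ (p.natDegree * q.natDegree) * q.leadingCoeff ^ p.natDegree *
      (p.leadingCoeff ^ q.natDegree)⁻¹ * PR q p := by
  have hlp : p.leadingCoeff ≠ 0 := leadingCoeff_ne_zero.mpr hp
  have key : ∀ (r : Polynomial ℂ) (w : ℂ), r.eval w =
      r.leadingCoeff * (r.roots.map (fun z => w - z)).prod := by
    intro r w
    conv_lhs => rw [(IsAlgClosed.splits r).eq_prod_roots]
    simp [eval_multiset_prod, Multiset.map_map, Function.comp_def]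
  have h1 : PR p q = q.leadingCoeff ^ p.natDegree *
      (p.roots.map (fun z => (q.roots.map (fun w => z - w)).prod)).prod := by
    unfold PR
    rw [show (p.roots.map fun z => q.eval z) =
        p.roots.map (fun z => q.leadingCoeff * (q.roots.map (fun w => z - w)).prod) from
      Multiset.map_congr rfl fun z _ => key q z]
    simp [Multiset.prod_map_mul, Multiset.map_const', Multiset.prod_replicate, card_roots_eq]
  have h2 : (p.roots.map (fun z => (q.roots.map (fun w => z - w)).prod)).prod =
      (q.roots.map (fun w => (p.roots.map (fun z => z - w)).prod)).prod := by
    rw [Multiset.prod_map_prod_map]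
  have h3 : ∀ w : ℂ, (p.roots.map (fun z => z - w)).prod =
      (-1) ^ p.natDegree * (p.eval w * (p.leadingCoeff)⁻¹) := by
    intro w
    have hmc : (p.roots.map (fun z => z - w)) =
        p.roots.map (fun z => (-1 : ℂ) * (w - z)) :=
      Multiset.map_congr rfl fun z _ => by ring
    rw [hmc, Multiset.prod_map_mul, Multiset.map_const', Multiset.prod_replicate,
      card_roots_eq, key p w]
    field_simp
  have h4 : (q.roots.map (fun w => (p.roots.map (fun z => z - w)).prod)).prod =
      ((-1) ^ p.natDegree * (p.leadingCoeff)⁻¹) ^ q.natDegree * PR q p := by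
    rw [show (q.roots.map fun w => (p.roots.map (fun z => z - w)).prod) =
        q.roots.map (fun w => ((-1) ^ p.natDegree * (p.leadingCoeff)⁻¹) * p.eval w) from
      Multiset.map_congr rfl fun w _ => by rw [h3 w]; ring]
    simp [PR, Multiset.prod_map_mul, Multiset.map_const', Multiset.prod_replicate, card_roots_eq]
  rw [h1, h2, h4, mul_pow, ← pow_mul, ← inv_pow]
  ring


lemma chain_step (p q s k : Polynomial ℂ) (c d lp lq vq : ℂ) (np nq : ℕ)
    (hid : C c * p = k * q + C d * s)
    (hnp : p.natDegree = np) (hnq : q.natDegree = nq)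
    (hlp : p.leadingCoeff = lp) (hlq : q.leadingCoeff = lq)
    (hlp0 : lp ≠ 0) (hc : c ≠ 0)
    (hs : PR q s = vq) :
    PR p q = (-1) ^ (np * nq) * lq ^ np * (lp ^ nq)⁻¹ * ((d ^ nq * vq) / c ^ nq) := by
  have hp0 : p ≠ 0 := fun h => hlp0 (by rw [← hlp, h, leadingCoeff_zero])
  have h1 : PR q (C c * p) = PR q (C d * s) := PR_congr _ _ _ k (by rw [hid])
  rw [PR_C_mul, PR_C_mul, hnq, hs] at h1
  have h2 : PR q p = (d ^ nq * vq) / c ^ nq :=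
    (eq_div_iff (pow_ne_zero nq hc)).mpr (by rw [mul_comm (PR q p), h1])
  rw [PR_swap p q hp0, hnp, hnq, hlp, hlq, h2]

noncomputable def p0 : Polynomial ℂ := X ^ 12 - 4 * X ^ 11 - 4 * X ^ 10 + 16 * X ^ 9 + 24 * X ^ 8 - 30 * X ^ 7 - 78 * X ^ 6 - 18 * X ^ 5 + 72 * X ^ 4 + 86 * X ^ 3 + 52 * X ^ 2 + 16 * X + 2
noncomputable def p1 : Polynomial ℂ := 12 * X ^ 11 - 44 * X ^ 10 - 40 * X ^ 9 + 144 * X ^ 8 + 192 * X ^ 7 - 210 * X ^ 6 - 468 * X ^ 5 - 90 * X ^ 4 + 288 * X ^ 3 + 258 * X ^ 2 + 104 * X + 16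
noncomputable def p2 : Polynomial ℂ := -34 * X ^ 10 + 52 * X ^ 9 + 216 * X ^ 8 - 129 * X ^ 7 - 807 * X ^ 6 - 423 * X ^ 5 + 819 * X ^ 4 + 1305 * X ^ 3 + 909 * X ^ 2 + 316 * X + 44
noncomputable def p3 : Polynomial ℂ := -16 * X ^ 9 - 345 * X ^ 8 + 24 * X ^ 7 + 1335 * X ^ 6 + 750 * X ^ 5 - 1323 * X ^ 4 - 2010 * X ^ 3 - 1692 * X ^ 2 - 636 * X - 92
noncomputable def p4 : Polynomial ℂ := -225 * X ^ 8 - 24 * X ^ 7 + 847 * X ^ 6 + 526 * X ^ 5 - 803 * X ^ 4 - 1258 * X ^ 3 - 1084 * X ^ 2 - 412 * X - 60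
noncomputable def p5 : Polynomial ℂ := 51 * X ^ 7 + 697 * X ^ 6 + 601 * X ^ 5 - 1103 * X ^ 4 - 1783 * X ^ 3 - 1159 * X ^ 2 - 412 * X - 60
noncomputable def p6 : Polynomial ℂ := -1039 * X ^ 6 - 1096 * X ^ 5 + 1559 * X ^ 4 + 2728 * X ^ 3 + 1807 * X ^ 2 + 652 * X + 96
noncomputable def p7 : Polynomial ℂ := -19270 * X ^ 5 - 79597 * X ^ 4 - 110146 * X ^ 3 - 167063 * X ^ 2 - 73196 * X - 11402
noncomputable def p8 : Polynomial ℂ := -38461 * X ^ 4 - 44048 * X ^ 3 - 148059 * X ^ 2 - 73328 * X - 12106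
noncomputable def p9 : Polynomial ℂ := 39730 * X ^ 3 + 121015 * X ^ 2 + 56500 * X + 8904
noncomputable def p10 : Polynomial ℂ := -67445 * X ^ 2 - 35996 * X - 6080
noncomputable def p11 : Polynomial ℂ := -844 * X - 225
noncomputable def p12 : Polynomial ℂ := C (-1)

lemma hnd0 : (p0).natDegree = 12 := by unfold p0; compute_degree!
lemma hlc0 : (p0).leadingCoeff = 1 := by rw [Polynomial.leadingCoeff, hnd0]; unfold p0; compute_degree!
lemma hnd1 : (p1).natDegree = 11 := by unfold p1; compute_degree!
lemma hlc1 : (p1).leadingCoeff = 12 := by rw [Polynomial.leadingCoeff, hnd1]; unfold p1; compute_degree!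
lemma hnd2 : (p2).natDegree = 10 := by unfold p2; compute_degree!
lemma hlc2 : (p2).leadingCoeff = -34 := by rw [Polynomial.leadingCoeff, hnd2]; unfold p2; compute_degree!
lemma hnd3 : (p3).natDegree = 9 := by unfold p3; compute_degree!
lemma hlc3 : (p3).leadingCoeff = -16 := by rw [Polynomial.leadingCoeff, hnd3]; unfold p3; compute_degree!
lemma hnd4 : (p4).natDegree = 8 := by unfold p4; compute_degree!
lemma hlc4 : (p4).leadingCoeff = -225 := by rw [Polynomial.leadingCoeff, hnd4]; unfold p4; compute_degree!
lemma hnd5 : (p5).natDegree = 7 := by unfold p5; compute_degree!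
lemma hlc5 : (p5).leadingCoeff = 51 := by rw [Polynomial.leadingCoeff, hnd5]; unfold p5; compute_degree!
lemma hnd6 : (p6).natDegree = 6 := by unfold p6; compute_degree!
lemma hlc6 : (p6).leadingCoeff = -1039 := by rw [Polynomial.leadingCoeff, hnd6]; unfold p6; compute_degree!
lemma hnd7 : (p7).natDegree = 5 := by unfold p7; compute_degree!
lemma hlc7 : (p7).leadingCoeff = -19270 := by rw [Polynomial.leadingCoeff, hnd7]; unfold p7; compute_degree!
lemma hnd8 : (p8).natDegree = 4 := by unfold p8; compute_degree!
lemma hlc8 : (p8).leadingCoeff = -38461 := by rw [Polynomial.leadingCoeff, hnd8]; unfold p8; compute_degree!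
lemma hnd9 : (p9).natDegree = 3 := by unfold p9; compute_degree!
lemma hlc9 : (p9).leadingCoeff = 39730 := by rw [Polynomial.leadingCoeff, hnd9]; unfold p9; compute_degree!
lemma hnd10 : (p10).natDegree = 2 := by unfold p10; compute_degree!
lemma hlc10 : (p10).leadingCoeff = -67445 := by rw [Polynomial.leadingCoeff, hnd10]; unfold p10; compute_degree!
lemma hnd11 : (p11).natDegree = 1 := by unfold p11; compute_degree!
lemma hlc11 : (p11).leadingCoeff = -844 := by rw [Polynomial.leadingCoeff, hnd11]; unfold p11; compute_degree!

lemma v11 : PR p11 p12 = (-1 : ℂ) := by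
  rw [show p12 = C ((-1 : ℂ)) from rfl, PR_C, hnd11]; norm_num

lemma v10 : PR p10 p11 = (13489 : ℂ) := by
  have hid : C (712336 : ℂ) * p10 = (56923580 * X + 15205499) * p11 + C (909765605 : ℂ) * p12 := by
    unfold p10 p11 p12
    simp only [map_ofNat, map_one, map_neg]
    ring
  rw [chain_step p10 p11 p12 _ _ _ _ _ (-1 : ℂ) 2 1 hid hnd10 hnd11 hlc10 hlc11 (by norm_num) (by norm_num) v11]
  norm_num

lemma v9 : PR p9 p10 = (-(2273000976 : ℂ) / 5) := by
  have hid : C (4548828025 : ℂ) * p9 = (-2679589850 * X - 6731735595) * p10 + C (1894167480 : ℂ) * p11 := by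
    unfold p9 p10 p11
    simp only [map_ofNat, map_one, map_neg]
    ring
  rw [chain_step p9 p10 p11 _ _ _ _ _ (13489 : ℂ) 3 2 hid hnd9 hnd10 hlc9 hlc10 (by norm_num) (by norm_num) v10]
  norm_num

lemma v8 : PR p8 p9 = (2048161585182516 : ℂ) := by
  have hid : C (1578472900 : ℂ) * p8 = (-1528055530 * X + 2904330875) * p9 + C (7396242605 : ℂ) * p10 := by
    unfold p8 p9 p10
    simp only [map_ofNat, map_one, map_neg]
    ring
  rw [chain_step p8 p9 p10 _ _ _ _ _ (-(2273000976 : ℂ) / 5) 4 3 hid hnd8 hnd9 hlc8 hlc9 (by norm_num) (by norm_num) v9]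
  norm_num

lemma v7 : PR p7 p8 = (-402081765566947560000 : ℂ) := by
  have hid : C (1479248521 : ℂ) * p7 = (741143470 * X + 2212575257) * p8 + C (1113998700 : ℂ) * p9 := by
    unfold p7 p8 p9
    simp only [map_ofNat, map_one, map_neg]
    ring
  rw [chain_step p7 p8 p9 _ _ _ _ _ (2048161585182516 : ℂ) 5 4 hid hnd7 hnd8 hlc7 hlc8 (by norm_num) (by norm_num) v8]
  norm_num

lemma v6 : PR p6 p7 = (1218193107427860237576715284 : ℂ) := by
  have hid : C (371332900 : ℂ) * p6 = (20021530 * X - 61581363) * p7 + C (55055571 : ℂ) * p8 := by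
    unfold p6 p7 p8
    simp only [map_ofNat, map_one, map_neg]
    ring
  rw [chain_step p6 p7 p8 _ _ _ _ _ (-402081765566947560000 : ℂ) 6 5 hid hnd6 hnd7 hlc6 hlc7 (by norm_num) (by norm_num) v7]
  norm_num

lemma v5 : PR p5 p6 = (-(24100653779712 : ℂ) / 17) := by
  have hid : C (1079521 : ℂ) * p5 = (-52989 * X - 668287) * p6 + C (54 : ℂ) * p7 := by
    unfold p5 p6 p7
    simp only [map_ofNat, map_one, map_neg]
    ring
  rw [chain_step p5 p6 p7 _ _ _ _ _ (1218193107427860237576715284 : ℂ) 7 6 hid hnd5 hnd6 hlc5 hlc6 (by norm_num) (by norm_num) v6]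
  norm_num

lemma v4 : PR p4 p5 = (201781504687500000000 : ℂ) := by
  have hid : C (2601 : ℂ) * p4 = (-11475 * X + 155601) * p5 + C (95625 : ℂ) * p6 := by
    unfold p4 p5 p6
    simp only [map_ofNat, map_one, map_neg]
    ring
  rw [chain_step p4 p5 p6 _ _ _ _ _ (-(24100653779712 : ℂ) / 17) 8 7 hid hnd4 hnd5 hlc4 hlc5 (by norm_num) (by norm_num) v5]
  norm_num

lemma v3 : PR p3 p4 = (-760840571584512 : ℂ) := by
  have hid : C (50625 : ℂ) * p3 = (3600 * X + 77241) * p4 + C (384 : ℂ) * p5 := by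
    unfold p3 p4 p5
    simp only [map_ofNat, map_one, map_neg]
    ring
  rw [chain_step p3 p4 p5 _ _ _ _ _ (201781504687500000000 : ℂ) 9 8 hid hnd3 hnd4 hlc3 hlc4 (by norm_num) (by norm_num) v4]
  norm_num

lemma v2 : PR p2 p3 = (974988634702224518626590457227 : ℂ) := by
  have hid : C (256 : ℂ) * p2 = (544 * X - 12562) * p3 + C (19074 : ℂ) * p4 := by
    unfold p2 p3 p4
    simp only [map_ofNat, map_one, map_neg]
    ring
  rw [chain_step p2 p3 p4 _ _ _ _ _ (-760840571584512 : ℂ) 10 9 hid hnd2 hnd3 hlc2 hlc3 (by norm_num) (by norm_num) v3]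
  norm_num

lemma v1 : PR p1 p2 = (-57334278394267480607738696982 : ℂ) := by
  have hid : C (1156 : ℂ) * p1 = (-408 * X + 872) * p2 + C (216 : ℂ) * p3 := by
    unfold p1 p2 p3
    simp only [map_ofNat, map_one, map_neg]
    ring
  rw [chain_step p1 p2 p3 _ _ _ _ _ (974988634702224518626590457227 : ℂ) 11 10 hid hnd1 hnd2 hlc1 hlc2 (by norm_num) (by norm_num) v2]
  norm_num

lemma v0 : PR p0 p1 = (-7954112831814919831641440256 : ℂ) := by
  have hid : C (144 : ℂ) * p0 = (12 * X - 4) * p1 + C (8 : ℂ) * p2 := by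
    unfold p0 p1 p2
    simp only [map_ofNat, map_one, map_neg]
    ring
  rw [chain_step p0 p1 p2 _ _ _ _ _ (-57334278394267480607738696982 : ℂ) 12 11 hid hnd0 hnd1 hlc0 hlc1 (by norm_num) (by norm_num) v1]
  norm_num


open Finset in
lemma pair_split (r : Fin 12 → ℂ) :
    (∏ i : Fin 12, ∏ j ∈ Finset.univ.filter (fun j => i < j), (r i - r j) ^ 2)
      = ∏ i : Fin 12, ∏ j ∈ Finset.univ.erase i, (r i - r j) := by
  have hsplit : ∀ i : Fin 12, (Finset.univ.erase i) =
      (Finset.univ.filter (fun j => j < i)) ∪ (Finset.univ.filter (fun j => i < j)) := by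
    intro i
    ext j
    simp only [Finset.mem_erase, Finset.mem_union, Finset.mem_filter, Finset.mem_univ,
      true_and, and_true]
    constructor
    · exact fun h => lt_or_gt_of_ne h
    · rintro (h | h)
      exacts [ne_of_lt h, ne_of_gt h]
  have hdisj : ∀ i : Fin 12,
      Disjoint (Finset.univ.filter (fun j => j < i)) (Finset.univ.filter (fun j => i < j)) := by
    intro i
    rw [Finset.disjoint_left]
    intro j hj hj'
    simp only [Finset.mem_filter] at hj hj'
    exact absurd hj'.2 (not_lt_of_gt hj.2)
  have hB : (∏ i : Fin 12, ∏ j ∈ Finset.univ.filter (fun j => j < i), (r i - r j))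
      = ∏ i : Fin 12, ∏ j ∈ Finset.univ.filter (fun j => i < j), (r j - r i) := by
    rw [Finset.prod_comm' (t' := Finset.univ) (s' := fun j => Finset.univ.filter (fun i => j < i))]
    intro i j
    simp only [Finset.mem_filter, Finset.mem_univ, true_and, and_true, true_and]
  calc (∏ i : Fin 12, ∏ j ∈ Finset.univ.filter (fun j => i < j), (r i - r j) ^ 2)
      = ∏ i : Fin 12, ∏ j ∈ Finset.univ.filter (fun j => i < j),
          ((r j - r i) * (r i - r j)) := by
        rw [← one_mul (∏ i : Fin 12, ∏ j ∈ Finset.univ.filter (fun j => i < j),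
          ((r j - r i) * (r i - r j)))]
        have hsign : (1 : ℂ) = ∏ i : Fin 12, ∏ j ∈ Finset.univ.filter (fun j => i < j),
            (-1 : ℂ) := by
          rw [Finset.prod_congr rfl (fun i _ => Finset.prod_const (-1 : ℂ)),
            Finset.prod_pow_eq_pow_sum]
          rw [show (∑ i : Fin 12, (Finset.univ.filter (fun j => i < j)).card) = 66 from by decide]
          norm_num
        rw [hsign, ← Finset.prod_mul_distrib]
        refine Finset.prod_congr rfl fun i _ => ?_
        rw [← Finset.prod_mul_distrib]
        refine Finset.prod_congr rfl fun j _ => by ring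
    _ = (∏ i : Fin 12, ∏ j ∈ Finset.univ.filter (fun j => j < i), (r i - r j)) *
        (∏ i : Fin 12, ∏ j ∈ Finset.univ.filter (fun j => i < j), (r i - r j)) := by
        rw [hB, ← Finset.prod_mul_distrib]
        refine Finset.prod_congr rfl fun i _ => ?_
        rw [← Finset.prod_mul_distrib]
    _ = ∏ i : Fin 12, ∏ j ∈ Finset.univ.erase i, (r i - r j) := by
        rw [← Finset.prod_mul_distrib]
        refine Finset.prod_congr rfl fun i _ => ?_
        rw [hsplit i, Finset.prod_union (hdisj i)]

/-- The discriminant of the monic degree-12 polynomial `f₁`, expressed via its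
complex roots: if `f₁` splits over `ℂ` with roots `r 0, …, r 11`, then
`∏_{i<j} (r i - r j)² = -2^14 · 3^30 · 11^9`. -/
theorem f1_discriminant
    (r : Fin 12 → ℂ)
    (hr : (X ^ 12 - 4 * X ^ 11 - 4 * X ^ 10 + 16 * X ^ 9 + 24 * X ^ 8 - 30 * X ^ 7
        - 78 * X ^ 6 - 18 * X ^ 5 + 72 * X ^ 4 + 86 * X ^ 3 + 52 * X ^ 2 + 16 * X + 2 :
        Polynomial ℂ) = ∏ i : Fin 12, (X - C (r i))) :
    (∏ i : Fin 12, ∏ j ∈ Finset.univ.filter (fun j => i < j), (r i - r j) ^ 2)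
      = -(2 ^ 14 * 3 ^ 30 * 11 ^ 9) := by
  have hp0 : p0 = ∏ i : Fin 12, (X - C (r i)) := hr
  -- derivative of p0 is p1
  have hder : derivative p0 = p1 := by
    unfold p0 p1
    simp only [derivative_sub, derivative_add, derivative_mul, derivative_X_pow, derivative_X,
      derivative_ofNat, derivative_C, Nat.cast_ofNat, map_ofNat]
    ring
  -- roots of p0
  have hroots : p0.roots = Finset.univ.val.map r := by
    rw [hp0, Finset.prod_eq_multiset_prod,
      show Finset.univ.val.map (fun i : Fin 12 => X - C (r i)) =
        (Finset.univ.val.map r).map (fun a => X - C a) from (Multiset.map_map _ _ _).symm,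
      roots_multiset_prod_X_sub_C]
  -- key evaluation of the derivative at each root
  have hkey : ∀ i : Fin 12, eval (r i) (derivative p0) =
      ∏ j ∈ Finset.univ.erase i, (r i - r j) := by
    intro i
    rw [hp0, Finset.prod_eq_multiset_prod, derivative_prod]
    rw [show (Multiset.map (fun k : Fin 12 =>
        (Multiset.map (fun j : Fin 12 => X - C (r j)) (Finset.univ.val.erase k)).prod *
          derivative (X - C (r k))) Finset.univ.val) =
      Multiset.map (fun k : Fin 12 =>
        (Multiset.map (fun j : Fin 12 => X - C (r j)) (Finset.univ.val.erase k)).prod)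
        Finset.univ.val from Multiset.map_congr rfl fun k _ => by
          simp [derivative_sub, derivative_X, derivative_C]]
    have hsum := map_multiset_sum (evalRingHom (r i)) (Multiset.map (fun k : Fin 12 =>
        (Multiset.map (fun j : Fin 12 => X - C (r j)) (Finset.univ.val.erase k)).prod)
        Finset.univ.val)
    simp only [coe_evalRingHom] at hsum
    rw [hsum, Multiset.map_map]
    have hterm : ∀ k ∈ Finset.univ.val, (eval (r i) ∘ fun k : Fin 12 =>
        (Multiset.map (fun j : Fin 12 => X - C (r j)) (Finset.univ.val.erase k)).prod) k =
        if k = i then ∏ j ∈ Finset.univ.erase i, (r i - r j) else 0 := by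
      intro k _
      simp only [Function.comp_apply, eval_multiset_prod, Multiset.map_map]
      by_cases hk : k = i
      · subst hk
        rw [if_pos rfl, Finset.prod_eq_multiset_prod, Finset.erase_val]
        refine congrArg Multiset.prod (Multiset.map_congr rfl fun j _ => ?_)
        simp
      · rw [if_neg hk]
        have hi : i ∈ Finset.univ.val.erase k :=
          Multiset.mem_erase_of_ne (fun h => hk h.symm) |>.mpr (Finset.mem_univ_val _)
        refine Multiset.prod_eq_zero ?_
        refine Multiset.mem_map.mpr ⟨i, hi, ?_⟩
        simp
    rw [Multiset.map_congr rfl hterm]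
    rw [show Finset.univ.val = (Finset.univ : Finset (Fin 12)).val from rfl,
      ← Finset.sum_eq_multiset_sum]
    rw [Finset.sum_ite_eq' Finset.univ i
      (fun _ => ∏ j ∈ Finset.univ.erase i, (r i - r j)), if_pos (Finset.mem_univ i)]
  -- assemble
  have hPR : PR p0 p1 = ∏ i : Fin 12, ∏ j ∈ Finset.univ.erase i, (r i - r j) := by
    unfold PR
    rw [hroots, Multiset.map_map, ← Finset.prod_eq_multiset_prod]
    refine Finset.prod_congr rfl fun i _ => ?_
    simp only [Function.comp_apply]
    rw [← hder, hkey i]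
  rw [pair_split r, ← hPR, v0]
  norm_num
end

section
/- The quartic polynomial x^4 - 2x^3 - 4x^2 - 6x - 2 is irreducible over ℚ and its Galois group is the symmetric group S₄. -/
open Polynomial
open scoped IntermediateField

section Helpers

lemma quartic_aux_multiset_exists_cons {K : Type*} {s : Multiset K} (h : s ≠ 0) :
    ∃ a t, s = a ::ₘ t := by
  rcases Multiset.exists_mem_of_ne_zero h with ⟨a, ha⟩
  exact ⟨a, _, (Multiset.exists_cons_of_mem ha).choose_spec⟩

lemma quartic_aux_multiset_card_four {K : Type*} (s : Multiset K) (h : Multiset.card s = 4) :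
    ∃ a b c d, s = {a, b, c, d} := by
  obtain ⟨a, t, rfl⟩ := quartic_aux_multiset_exists_cons (s := s) (by rintro rfl; simp at h)
  simp only [Multiset.card_cons] at h
  obtain ⟨b, t, rfl⟩ := quartic_aux_multiset_exists_cons (s := t) (by rintro rfl; simp at h)
  simp only [Multiset.card_cons] at h
  obtain ⟨c, t, rfl⟩ := quartic_aux_multiset_exists_cons (s := t) (by rintro rfl; simp at h)
  simp only [Multiset.card_cons] at h
  obtain ⟨d, t, rfl⟩ := quartic_aux_multiset_exists_cons (s := t) (by rintro rfl; simp at h)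
  simp only [Multiset.card_cons] at h
  have : t = 0 := by simpa using h
  exact ⟨a, b, c, d, by simp [this]⟩

lemma quartic_aux_vieta {L : Type*} [Field L] [CharZero L] {a b c d : L}
    (h : (X ^ 4 - 2 * X ^ 3 - 4 * X ^ 2 - 6 * X - 2 : L[X]) =
      (X - C a) * (X - C b) * (X - C c) * (X - C d)) :
    a + b + c + d = 2 ∧ a*b + a*c + a*d + b*c + b*d + c*d = -4 ∧
      a*b*c + a*b*d + a*c*d + b*c*d = 6 ∧ a*b*c*d = -2 := by
  have h0 := congrArg (eval (0 : L)) h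
  have h1 := congrArg (eval (1 : L)) h
  have hm1 := congrArg (eval (-1 : L)) h
  have h2 := congrArg (eval (2 : L)) h
  simp only [eval_mul, eval_sub, eval_pow, eval_X, eval_C, eval_ofNat] at h0 h1 hm1 h2
  norm_num at h0 h1 hm1 h2
  refine ⟨?_, ?_, ?_, ?_⟩
  · linear_combination (1/2) * h0 + (-1/2) * h1 + (-1/6) * hm1 + (1/6) * h2
  · linear_combination (1 : L) * h0 + (-1/2) * h1 + (-1/2) * hm1
  · linear_combination (-1/2) * h0 + (1 : L) * h1 + (-1/3) * hm1 + (-1/6) * h2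
  · linear_combination -h0

lemma quartic_aux_resolvent_root {L : Type*} [CommRing L] {a b c d : L}
    (hE1 : a + b + c + d = 2) (hE2 : a*b + a*c + a*d + b*c + b*d + c*d = -4)
    (hE3 : a*b*c + a*b*d + a*c*d + b*c*d = 6) (hE4 : a*b*c*d = -2) :
    (a*b + c*d)^3 + 4*(a*b + c*d)^2 + 20*(a*b + c*d) + 4 = 0 := by
  linear_combination
    (-(a*b*c + a*b*d + a*c*d + b*c*d) * (a*b + c*d) - 2*(a + b + c + d + 2)) * hE1 +
    ((a*b + c*d)^2 + 8) * hE2 +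
    (-2*(a*b + c*d) + (a*b*c + a*b*d + a*c*d + b*c*d + 6)) * hE3 +
    (4*(a*b + c*d) + (a + b + c + d)^2 - 4*(a*b + a*c + a*d + b*c + b*d + c*d)) * hE4

lemma quartic_aux_not_all_real {a b c d : ℝ}
    (hE1 : a + b + c + d = 2) (hE2 : a*b + a*c + a*d + b*c + b*d + c*d = -4)
    (hE3 : a*b*c + a*b*d + a*c*d + b*c*d = 6) (hE4 : a*b*c*d = -2) : False := by
  have hp2 : a^2 + b^2 + c^2 + d^2 = 12 := by
    linear_combination (a + b + c + d + 2) * hE1 - 2 * hE2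
  have hp3 : a^3 + b^3 + c^3 + d^3 = 50 := by
    linear_combination ((a+b+c+d)^2 + 2*(a+b+c+d) + 4 - 3*(a*b+a*c+a*d+b*c+b*d+c*d)) * hE1
      - 6 * hE2 + 3 * hE3
  have hp4 : a^4 + b^4 + c^4 + d^4 = 168 := by
    linear_combination (120 + 40*(a+b+c+d-2) + 8*(a+b+c+d-2)^2 + (a+b+c+d-2)^3
        - 16*(a*b+a*c+a*d+b*c+b*d+c*d+4) - 4*(a+b+c+d-2)*(a*b+a*c+a*d+b*c+b*d+c*d+4)
        + 4*(a*b*c+a*b*d+a*c*d+b*c*d-6)) * hE1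
      + (-32 + 2*(a*b+a*c+a*d+b*c+b*d+c*d+4)) * hE2 + 8 * hE3 + (-4 : ℝ) * hE4
  have key : (a^2+b^2+c^2+d^2) * (a^4+b^4+c^4+d^4) - (a^3+b^3+c^3+d^3)^2 =
      (a*b*(a-b))^2 + (a*c*(a-c))^2 + (a*d*(a-d))^2 + (b*c*(b-c))^2 + (b*d*(b-d))^2
        + (c*d*(c-d))^2 := by ring
  nlinarith [sq_nonneg (a*b*(a-b)), sq_nonneg (a*c*(a-c)), sq_nonneg (a*d*(a-d)),
    sq_nonneg (b*c*(b-c)), sq_nonneg (b*d*(b-d)), sq_nonneg (c*d*(c-d)), key, hp2, hp3, hp4]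

lemma quartic_aux_zint_irred : Irreducible (X ^ 4 - 2 * X ^ 3 - 4 * X ^ 2 - 6 * X - 2 : ℤ[X]) := by
  have hmonic : (X ^ 4 - 2 * X ^ 3 - 4 * X ^ 2 - 6 * X - 2 : ℤ[X]).Monic := by monicity!
  have hnd : (X ^ 4 - 2 * X ^ 3 - 4 * X ^ 2 - 6 * X - 2 : ℤ[X]).natDegree = 4 := by
    compute_degree!
  have heis : (X ^ 4 - 2 * X ^ 3 - 4 * X ^ 2 - 6 * X - 2 : ℤ[X]).IsEisensteinAt
      (Ideal.span {(2:ℤ)}) := by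
    constructor
    · rw [hmonic.leadingCoeff, Ideal.mem_span_singleton]
      norm_num
    · intro n hn
      rw [hnd] at hn
      rw [Ideal.mem_span_singleton]
      interval_cases n <;> simp [coeff_one, coeff_X] <;> norm_num
    · have hc0 : (X ^ 4 - 2 * X ^ 3 - 4 * X ^ 2 - 6 * X - 2 : ℤ[X]).coeff 0 = -2 := by
        simp [coeff_one, coeff_X]
      rw [Ideal.span_singleton_pow, Ideal.mem_span_singleton, hc0]
      decide
  exact heis.irreducible ((Ideal.span_singleton_prime (by norm_num)).mpr Int.prime_two)
    hmonic.isPrimitive (by rw [hnd]; norm_num)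

lemma quartic_aux_pq_irred : Irreducible (X ^ 4 - 2 * X ^ 3 - 4 * X ^ 2 - 6 * X - 2 : ℚ[X]) := by
  have hmonic : (X ^ 4 - 2 * X ^ 3 - 4 * X ^ 2 - 6 * X - 2 : ℤ[X]).Monic := by monicity!
  have := (Polynomial.IsPrimitive.Int.irreducible_iff_irreducible_map_cast
    hmonic.isPrimitive).mp quartic_aux_zint_irred
  convert this using 1
  simp [Polynomial.map_ofNat]

lemma quartic_aux_pq_monic : (X ^ 4 - 2 * X ^ 3 - 4 * X ^ 2 - 6 * X - 2 : ℚ[X]).Monic := by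
  monicity!

lemma quartic_aux_pq_natDegree : (X ^ 4 - 2 * X ^ 3 - 4 * X ^ 2 - 6 * X - 2 : ℚ[X]).natDegree = 4 := by
  compute_degree!

lemma quartic_aux_R_monic : (X ^ 3 + 4 * X ^ 2 + 20 * X + 4 : ℚ[X]).Monic := by monicity!

lemma quartic_aux_R_natDegree : (X ^ 3 + 4 * X ^ 2 + 20 * X + 4 : ℚ[X]).natDegree = 3 := by
  compute_degree!

lemma quartic_aux_R_irred : Irreducible (X ^ 3 + 4 * X ^ 2 + 20 * X + 4 : ℚ[X]) := by
  have hnd := quartic_aux_R_natDegree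
  rw [quartic_aux_R_monic.irreducible_iff_roots_eq_zero_of_degree_le_three
    (by omega) (by omega)]
  rw [Multiset.eq_zero_iff_forall_notMem]
  intro x hx
  rw [mem_roots', IsRoot] at hx
  have hx' : x ^ 3 + 4 * x ^ 2 + 20 * x + 4 = 0 := by
    have := hx.2; simp at this; linear_combination this
  have haev : aeval x (X ^ 3 + 4 * X ^ 2 + 20 * X + 4 : ℤ[X]) = 0 := by
    simp only [map_add, map_pow, map_mul, aeval_X, map_ofNat]
    linear_combination hx'
  have hint : IsLocalization.IsInteger ℤ x :=
    isInteger_of_is_root_of_monic (by monicity!) haev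
  obtain ⟨n, hn0⟩ := hint
  have hn : (n:ℚ) ^ 3 + 4 * (n:ℚ) ^ 2 + 20 * (n:ℚ) + 4 = 0 := by
    rw [show ((n:ℚ)) = x from hn0]; exact hx'
  have hn' : n ^ 3 + 4 * n ^ 2 + 20 * n + 4 = 0 := by exact_mod_cast hn
  rcases le_or_gt 0 n with h | h
  · nlinarith
  · nlinarith [sq_nonneg (n + 2)]

open Equiv Equiv.Perm in
lemma quartic_aux_perm_fin4_subgroup_eq_top (H : Subgroup (Equiv.Perm (Fin 4)))
    (h3 : 3 ∣ Nat.card H) (h4 : 4 ∣ Nat.card H)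
    (hswap : ∃ σ ∈ H, σ.IsSwap) : H = ⊤ := by
  have hcardG : Nat.card (Equiv.Perm (Fin 4)) = 24 := by
    simp [Nat.card_eq_fintype_card, Fintype.card_perm]; rfl
  have hdvd : Nat.card H ∣ 24 := hcardG ▸ H.card_subgroup_dvd_card
  have h12 : 12 ∣ Nat.card H := Nat.Coprime.mul_dvd_of_dvd_of_dvd (by norm_num) h3 h4
  obtain ⟨k, hk⟩ := h12
  have hkdvd : 12 * k ∣ 24 := hk ▸ hdvd
  have hk0 : 0 < k := by
    rcases Nat.eq_zero_or_pos k with rfl | h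
    · rw [mul_zero] at hk
      exact absurd hk (Nat.card_pos (α := H)).ne'
    · exact h
  have hkle : k ≤ 2 := by
    have := Nat.le_of_dvd (by norm_num) hkdvd
    omega
  interval_cases k
  · -- card H = 12
    exfalso
    have hidx : H.index = 2 := by
      have := H.card_mul_index
      rw [hcardG, hk] at this
      omega
    have hA : alternatingGroup (Fin 4) ≤ H := by
      rw [← closure_three_cycles_eq_alternating, Subgroup.closure_le]
      intro σ hσ
      have h3c : IsThreeCycle σ := hσ
      have : σ = (σ * σ) * (σ * σ) := by
        have ho : σ ^ 3 = 1 := by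
          rw [← h3c.orderOf]; exact pow_orderOf_eq_one σ
        have h4' : σ ^ 4 = σ := by rw [pow_succ, ho, one_mul]
        calc σ = σ ^ 4 := h4'.symm
        _ = (σ ^ 2) ^ 2 := by rw [← pow_mul]
        _ = (σ * σ) * (σ * σ) := by rw [pow_two, pow_two]
      rw [this]
      exact H.mul_mem (Subgroup.mul_self_mem_of_index_two hidx σ)
        (Subgroup.mul_self_mem_of_index_two hidx σ)
    have hAcard : Nat.card (alternatingGroup (Fin 4)) = 12 := by
      have h2 : 2 * Fintype.card (alternatingGroup (Fin 4)) = 24 := by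
        rw [two_mul_card_alternatingGroup]
        simp [Fintype.card_perm]; rfl
      simp only [Nat.card_eq_fintype_card]
      omega
    have hHA : alternatingGroup (Fin 4) = H :=
      Subgroup.eq_of_le_of_card_ge hA (by rw [hAcard, hk])
    obtain ⟨σ, hσH, hσswap⟩ := hswap
    rw [← hHA, mem_alternatingGroup] at hσH
    obtain ⟨x, y, hxy, rfl⟩ := hσswap
    rw [sign_swap hxy] at hσH
    exact absurd hσH (by decide)
  · exact Subgroup.eq_top_of_card_eq H (by rw [hk, hcardG])

/-- `Equiv.permCongr` as a `MulEquiv`. -/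
def quartic_aux_permCongrMulEquiv {α β : Type*} (e : α ≃ β) :
    Equiv.Perm α ≃* Equiv.Perm β :=
  { Equiv.permCongr e with
    map_mul' := fun p q => by
      ext x
      simp [Equiv.permCongr_def] }

end Helpers

/-- `x⁴ - 2x³ - 4x² - 6x - 2` is irreducible over `ℚ` with Galois group `S₄`. -/
theorem quartic1_galois_S4 :
    Irreducible (X ^ 4 - 2 * X ^ 3 - 4 * X ^ 2 - 6 * X - 2 : Polynomial ℚ) ∧
    Nonempty ((X ^ 4 - 2 * X ^ 3 - 4 * X ^ 2 - 6 * X - 2 : Polynomial ℚ).Gal ≃*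
      Equiv.Perm (Fin 4)) := by
  set p : ℚ[X] := X ^ 4 - 2 * X ^ 3 - 4 * X ^ 2 - 6 * X - 2 with hp
  refine ⟨quartic_aux_pq_irred, ?_⟩
  have hp0 : p ≠ 0 := fun h => by
    have := quartic_aux_pq_natDegree
    rw [← hp, h] at this
    simp at this
  -- the splitting field
  set K := p.SplittingField with hK
  haveI : CharZero K := charZero_of_injective_algebraMap (algebraMap ℚ K).injective
  -- roots of p in K
  have hqmonic : (p.map (algebraMap ℚ K)).Monic := quartic_aux_pq_monic.map _
  have hqdeg : (p.map (algebraMap ℚ K)).natDegree = 4 := by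
    rw [natDegree_map, quartic_aux_pq_natDegree]
  have hqsplits : (p.map (algebraMap ℚ K)).Splits :=
    SplittingField.splits p
  have hrcard : Multiset.card (p.map (algebraMap ℚ K)).roots = 4 := by
    rw [splits_iff_card_roots.mp hqsplits, hqdeg]
  obtain ⟨a, b, c, d, habcd⟩ := quartic_aux_multiset_card_four _ hrcard
  have hqprod : p.map (algebraMap ℚ K) = (X - C a) * (X - C b) * (X - C c) * (X - C d) := by
    rw [hqsplits.eq_prod_roots_of_monic hqmonic, habcd]
    simp only [Multiset.insert_eq_cons, Multiset.map_cons, Multiset.map_singleton,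
      Multiset.prod_cons, Multiset.prod_singleton]
    ring
  have hqex : p.map (algebraMap ℚ K) = (X ^ 4 - 2 * X ^ 3 - 4 * X ^ 2 - 6 * X - 2 : K[X]) := by
    simp only [hp]
    simp [Polynomial.map_ofNat]
  obtain ⟨hE1, hE2, hE3, hE4⟩ := quartic_aux_vieta (hqex.symm.trans hqprod)
  -- finite dimensionality and Galois group cardinality
  have hcardGal : Fintype.card p.Gal = Module.finrank ℚ K := by
    rw [← Nat.card_eq_fintype_card]; exact Polynomial.Gal.card_of_separable quartic_aux_pq_irred.separable
  -- dvd by 4 : the root a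
  have ha : aeval a p = 0 := by
    rw [aeval_def, ← eval_map, hqprod]
    simp
  have hainteg : IsIntegral ℚ a := ⟨p, quartic_aux_pq_monic, by rw [← aeval_def]; exact ha⟩
  have h4dvd : 4 ∣ Module.finrank ℚ K := by
    have hmin : minpoly ℚ a = p :=
      (minpoly.eq_of_irreducible_of_monic quartic_aux_pq_irred ha quartic_aux_pq_monic).symm
    have hfr : Module.finrank ℚ ℚ⟮a⟯ = 4 := by
      rw [IntermediateField.adjoin.finrank hainteg, hmin, quartic_aux_pq_natDegree]
    exact ⟨Module.finrank ℚ⟮a⟯ K, by rw [← hfr, Module.finrank_mul_finrank]⟩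
  -- dvd by 3 : the resolvent cubic root
  have h3dvd : 3 ∣ Module.finrank ℚ K := by
    have hβ := quartic_aux_resolvent_root hE1 hE2 hE3 hE4
    set β : K := a * b + c * d with hβdef
    have haevβ : aeval β (X ^ 3 + 4 * X ^ 2 + 20 * X + 4 : ℚ[X]) = 0 := by
      simp only [map_add, map_pow, map_mul, aeval_X, map_ofNat]
      linear_combination hβ
    have hβinteg : IsIntegral ℚ β :=
      ⟨_, quartic_aux_R_monic, by rw [← aeval_def]; exact haevβ⟩
    have hmin : minpoly ℚ β = (X ^ 3 + 4 * X ^ 2 + 20 * X + 4 : ℚ[X]) :=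
      (minpoly.eq_of_irreducible_of_monic quartic_aux_R_irred haevβ quartic_aux_R_monic).symm
    have hfr : Module.finrank ℚ ℚ⟮β⟯ = 3 := by
      rw [IntermediateField.adjoin.finrank hβinteg, hmin, quartic_aux_R_natDegree]
    exact ⟨Module.finrank ℚ⟮β⟯ K, by rw [← hfr, Module.finrank_mul_finrank]⟩
  -- the action on complex roots
  haveI : Fact ((p.map (algebraMap ℚ ℂ)).Splits) := Polynomial.Gal.splits_ℚ_ℂ
  have hcard4 : Fintype.card (p.rootSet ℂ) = 4 := by
    rw [card_rootSet_eq_natDegree quartic_aux_pq_irred.separable (IsAlgClosed.splits _),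
      quartic_aux_pq_natDegree]
  let e : p.rootSet ℂ ≃ Fin 4 := Fintype.equivFinOfCardEq hcard4
  let φ : p.Gal →* Equiv.Perm (Fin 4) :=
    (quartic_aux_permCongrMulEquiv e).toMonoidHom.comp (Polynomial.Gal.galActionHom p ℂ)
  have hφinj : Function.Injective φ :=
    (quartic_aux_permCongrMulEquiv e).injective.comp (Polynomial.Gal.galActionHom_injective p ℂ)
  -- real root count
  have hreal2 : 2 ≤ Fintype.card (p.rootSet ℝ) := by
    have hg : Continuous (fun x : ℝ => x^4 - 2*x^3 - 4*x^2 - 6*x - 2) := by fun_prop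
    obtain ⟨x1, hx1mem, hx1⟩ := intermediate_value_Icc' (by norm_num : (-1:ℝ) ≤ 0)
      hg.continuousOn (by norm_num : (0:ℝ) ∈ Set.Icc ((0:ℝ)^4 - 2*0^3 - 4*0^2 - 6*0 - 2)
        ((-1:ℝ)^4 - 2*(-1)^3 - 4*(-1)^2 - 6*(-1) - 2))
    obtain ⟨x2, hx2mem, hx2⟩ := intermediate_value_Icc (by norm_num : (3:ℝ) ≤ 4)
      hg.continuousOn (by norm_num : (0:ℝ) ∈ Set.Icc ((3:ℝ)^4 - 2*3^3 - 4*3^2 - 6*3 - 2)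
        ((4:ℝ)^4 - 2*4^3 - 4*4^2 - 6*4 - 2))
    have hx1root : x1 ∈ p.rootSet ℝ := by
      rw [mem_rootSet]
      refine ⟨hp0, ?_⟩
      simp only [hp, map_sub, map_mul, map_pow, aeval_X, map_ofNat]
      linear_combination hx1
    have hx2root : x2 ∈ p.rootSet ℝ := by
      rw [mem_rootSet]
      refine ⟨hp0, ?_⟩
      simp only [hp, map_sub, map_mul, map_pow, aeval_X, map_ofNat]
      linear_combination hx2
    have hne : x1 ≠ x2 := by
      have h1 : x1 ≤ 0 := hx1mem.2
      have h2 : 3 ≤ x2 := hx2mem.1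
      intro h; rw [h] at h1; linarith
    have h1lt : 1 < Fintype.card (p.rootSet ℝ) :=
      Fintype.one_lt_card_iff.mpr ⟨⟨x1, hx1root⟩, ⟨x2, hx2root⟩, by simpa using hne⟩
    omega
  -- not all four roots are real
  have hreal_ne4 : Fintype.card (p.rootSet ℝ) ≠ 4 := by
    intro h4real
    have hmonR : (p.map (algebraMap ℚ ℝ)).Monic := quartic_aux_pq_monic.map _
    have hdegR : (p.map (algebraMap ℚ ℝ)).natDegree = 4 := by
      rw [natDegree_map, quartic_aux_pq_natDegree]
    have hcardeq : Fintype.card (p.rootSet ℝ) = (p.aroots ℝ).toFinset.card := by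
      classical
      simp_rw [rootSet_def, Finset.coe_sort_coe, Fintype.card_coe]
    have hle : (4:ℕ) ≤ Multiset.card (p.aroots ℝ) := by
      calc (4:ℕ) = (p.aroots ℝ).toFinset.card := by rw [← hcardeq, h4real]
      _ ≤ Multiset.card (p.aroots ℝ) := Multiset.toFinset_card_le _
    have hge : Multiset.card (p.aroots ℝ) ≤ 4 := hdegR ▸ card_roots' _
    have hcardR : Multiset.card (p.map (algebraMap ℚ ℝ)).roots = 4 := le_antisymm hge hle
    have hsplitsR : (p.map (algebraMap ℚ ℝ)).Splits :=
      splits_iff_card_roots.mpr (by rw [hcardR, hdegR])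

    obtain ⟨a', b', c', d', habcd'⟩ := quartic_aux_multiset_card_four _ hcardR
    have hqprodR : p.map (algebraMap ℚ ℝ) =
        (X - C a') * (X - C b') * (X - C c') * (X - C d') := by
      rw [hsplitsR.eq_prod_roots_of_monic hmonR, habcd']
      simp only [Multiset.insert_eq_cons, Multiset.map_cons, Multiset.map_singleton,
        Multiset.prod_cons, Multiset.prod_singleton]
      ring
    have hqexR : p.map (algebraMap ℚ ℝ) =
        (X ^ 4 - 2 * X ^ 3 - 4 * X ^ 2 - 6 * X - 2 : ℝ[X]) := by
      simp only [hp]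
      simp [Polynomial.map_ofNat]
    obtain ⟨hF1, hF2, hF3, hF4⟩ := quartic_aux_vieta (hqexR.symm.trans hqprodR)
    exact quartic_aux_not_all_real hF1 hF2 hF3 hF4
  -- complex conjugation acts as a transposition
  set conj : p.Gal := Polynomial.Gal.restrict p ℂ (AlgEquiv.restrictScalars ℚ Complex.conjAe)
    with hconj
  have key := Polynomial.Gal.card_complex_roots_eq_card_real_add_card_not_gal_inv p
  rw [Set.toFinset_card, Set.toFinset_card, hcard4, ← hconj] at key
  have hno1 : (Polynomial.Gal.galActionHom p ℂ conj).support.card ≠ 1 :=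
    Equiv.Perm.card_support_ne_one _
  have hsupp2 : (Polynomial.Gal.galActionHom p ℂ conj).support.card = 2 := by
    revert key hreal2 hreal_ne4 hno1
    omega
  obtain ⟨x, y, hxy, hσc⟩ := Equiv.Perm.card_support_eq_two.mp hsupp2
  have hτswap : (φ conj).IsSwap := by
    refine ⟨e x, e y, fun hexy => hxy (e.injective hexy), ?_⟩
    show (quartic_aux_permCongrMulEquiv e) (Polynomial.Gal.galActionHom p ℂ conj) = _
    rw [hσc]
    show Equiv.permCongr e (Equiv.swap x y) = _
    rw [Equiv.permCongr_def]
    exact Equiv.symm_trans_swap_trans x y e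
  -- conclude
  have hcardrange : Nat.card φ.range = Module.finrank ℚ K := by
    rw [Nat.card_congr (MonoidHom.ofInjective hφinj).toEquiv.symm, Nat.card_eq_fintype_card,
      hcardGal]
  have hrange : φ.range = ⊤ :=
    quartic_aux_perm_fin4_subgroup_eq_top φ.range (by rw [hcardrange]; exact h3dvd)
      (by rw [hcardrange]; exact h4dvd) ⟨φ conj, ⟨conj, rfl⟩, hτswap⟩
  have hsurj : Function.Surjective φ := by
    rw [← MonoidHom.range_eq_top]
    exact hrange
  exact ⟨MulEquiv.ofBijective φ ⟨hφinj, hsurj⟩⟩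
end
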